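/- Let P be the Cantor measure. For all n ≥ 2 and every optimal n-point set α_n ⊆ S_n = {(x,1/n): 0≤x≤1}, the Voronoi region of any element of α_n whose first coordinate lies in [0,1/3] contains no point of [2/3,1], and the Voronoi region of any element whose first coordinate lies in [2/3,1] contains no point of [0,1/3]. -/

import Mathlib

open MeasureTheory Real Set Filter
open scoped ENNReal Topology

noncomputable section

/-- First generating map of the Cantor set. -/
def T1 (x : ℝ) : ℝ := x / 3

/-- Second generating map of the Cantor set. -/
def T2 (x : ℝ) : ℝ := x / 3 + 2 / 3

/-- Map indexed by `Fin 2`. -/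
def Tm : Fin 2 → ℝ → ℝ := ![T1, T2]

/-- Composition `T_σ = T_{σ₁} ∘ ⋯ ∘ T_{σ_k}` for a word over `{1,2}` (as a list over `Fin 2`). -/
def Tw (l : List (Fin 2)) : ℝ → ℝ := l.foldr (fun i g => Tm i ∘ g) id

/-- Squared Euclidean distance between `x ∈ ℝ` (identified with `(x,0)`) and `(a,b) ∈ ℝ²`. -/
def rho (x : ℝ) (p : ℝ × ℝ) : ℝ := (x - p.1) ^ 2 + p.2 ^ 2

/-- Distortion error of a set `α ⊆ ℝ²` for `P`. -/
def distortion (P : Measure ℝ) (α : Set (ℝ × ℝ)) : ℝ := ∫ x, ⨅ a : α, rho x (a : ℝ × ℝ) ∂P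

/-- The constraint `S_j = {(x, 1/j) : 0 ≤ x ≤ 1}`. -/
def Sj (j : ℕ) : Set (ℝ × ℝ) := {p | p.1 ∈ Icc (0 : ℝ) 1 ∧ p.2 = 1 / (j : ℝ)}

/-- The `n`th constrained quantization error for `P` with respect to the family `Sj`. -/
def Vc (P : Measure ℝ) (n : ℕ) : ℝ :=
  sInf {e : ℝ | ∃ α : Finset (ℝ × ℝ), α.Nonempty ∧ α.card ≤ n ∧
    (↑α : Set (ℝ × ℝ)) ⊆ ⋃ j ∈ Finset.Icc 1 n, Sj j ∧ e = distortion P (↑α : Set (ℝ × ℝ))}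

lemma hT1m : Measurable T1 := by unfold T1; fun_prop
lemma hT2m : Measurable T2 := by unfold T2; fun_prop

variable (P : Measure ℝ) [IsProbabilityMeasure P]

lemma meas_eq (hP : P = (1 / 2 : ℝ≥0∞) • P.map T1 + (1 / 2 : ℝ≥0∞) • P.map T2)
    {s : Set ℝ} (hs : MeasurableSet s) :
    (P s).toReal = (P (T1 ⁻¹' s)).toReal / 2 + (P (T2 ⁻¹' s)).toReal / 2 := by
  conv_lhs => rw [hP]
  rw [Measure.add_apply, Measure.smul_apply, Measure.smul_apply,
      Measure.map_apply hT1m hs, Measure.map_apply hT2m hs]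
  rw [ENNReal.toReal_add, smul_eq_mul, smul_eq_mul, ENNReal.toReal_mul, ENNReal.toReal_mul]
  · norm_num; ring
  · exact ENNReal.mul_ne_top (by norm_num) (measure_ne_top _ _)
  · exact ENNReal.mul_ne_top (by norm_num) (measure_ne_top _ _)

lemma prob_Icc01 (hP : P = (1 / 2 : ℝ≥0∞) • P.map T1 + (1 / 2 : ℝ≥0∞) • P.map T2) :
    P (Icc (0:ℝ) 1) = 1 := by
  -- one-step equality
  have step : ∀ a b : ℝ, 0 ≤ a → 1 ≤ b →
      (P (Icc (-(3*a)) (3*b))).toReal = (P (Icc (-a) b)).toReal ∧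
      (P (Icc (-(3*a+2)) (3*b-2))).toReal = (P (Icc (-a) b)).toReal := by
    intro a b ha hb
    have h1 : T1 ⁻¹' Icc (-a) b = Icc (-(3*a)) (3*b) := by
      ext x; simp only [mem_preimage, T1, mem_Icc]; constructor <;> intro h <;>
        constructor <;> linarith [h.1, h.2]
    have h2 : T2 ⁻¹' Icc (-a) b = Icc (-(3*a+2)) (3*b-2) := by
      ext x; simp only [mem_preimage, T2, mem_Icc]; constructor <;> intro h <;>
        constructor <;> linarith [h.1, h.2]
    have key := meas_eq P hP (measurableSet_Icc (a := -a) (b := b))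
    rw [h1, h2] at key
    have m1 : (P (Icc (-a) b)).toReal ≤ (P (Icc (-(3*a)) (3*b))).toReal :=
      ENNReal.toReal_mono (measure_ne_top _ _)
        (measure_mono (Icc_subset_Icc (by linarith) (by linarith)))
    have m2 : (P (Icc (-a) b)).toReal ≤ (P (Icc (-(3*a+2)) (3*b-2))).toReal :=
      ENNReal.toReal_mono (measure_ne_top _ _)
        (measure_mono (Icc_subset_Icc (by linarith) (by linarith)))
    constructor <;> linarith
  have step2 : ∀ a b : ℝ, 0 ≤ a → 1 ≤ b →
      (P (Icc (-(9*a+2)) (9*b-2))).toReal = (P (Icc (-a) b)).toReal := by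
    intro a b ha hb
    have s1 := (step a b ha hb).1
    have s2 := (step (3*a) (3*b) (by linarith) (by linarith)).2
    have e1 : 3*(3*a)+2 = 9*a+2 := by ring
    have e2 : 3*(3*b)-2 = 9*b-2 := by ring
    rw [e1, e2] at s2
    linarith
  set A : ℕ → ℝ := fun k => ((9:ℝ)^k - 1)/4 with hA
  set B : ℕ → ℝ := fun k => (3*(9:ℝ)^k + 1)/4 with hB
  have hpow : ∀ k : ℕ, (1:ℝ) ≤ 9^k := fun k => one_le_pow₀ (by norm_num)
  have hAk : ∀ k, 0 ≤ A k := fun k => by simp only [hA]; linarith [hpow k]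
  have hBk : ∀ k, 1 ≤ B k := fun k => by simp only [hB]; linarith [hpow k]
  have main : ∀ k, (P (Icc (-(A k)) (B k))).toReal = (P (Icc (0:ℝ) 1)).toReal := by
    intro k; induction k with
    | zero => norm_num [hA, hB]
    | succ k ih =>
      have e1 : A (k+1) = 9 * A k + 2 := by simp only [hA]; rw [pow_succ]; ring
      have e2 : B (k+1) = 9 * B k - 2 := by simp only [hB]; rw [pow_succ]; ring
      rw [e1, e2, step2 (A k) (B k) (hAk k) (hBk k)]; exact ih
  -- increasing union is univ
  have hmono : Monotone (fun k => Icc (-(A k)) (B k)) := by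
    intro i j hij
    have hAm : A i ≤ A j := by
      simp only [hA]; have := pow_le_pow_right₀ (by norm_num : (1:ℝ) ≤ 9) hij; linarith
    have hBm : B i ≤ B j := by
      simp only [hB]; have := pow_le_pow_right₀ (by norm_num : (1:ℝ) ≤ 9) hij; linarith
    exact Icc_subset_Icc (by linarith) hBm
  have hunion : (⋃ k, Icc (-(A k)) (B k)) = univ := by
    ext x; simp only [mem_iUnion, mem_univ, iff_true]
    obtain ⟨k, hk⟩ := pow_unbounded_of_one_lt (4*|x|+1) (by norm_num : (1:ℝ) < 9)
    refine ⟨k, ?_, ?_⟩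
    · simp only [hA]; cases abs_cases x with
      | inl h => nlinarith [h.1, abs_nonneg x]
      | inr h => nlinarith [h.1, abs_nonneg x]
    · simp only [hB]; cases abs_cases x with
      | inl h => nlinarith [abs_nonneg x]
      | inr h => nlinarith [abs_nonneg x]
  have := Directed.measure_iUnion (μ := P) (s := fun k => Icc (-(A k)) (B k))
    (hmono.directed_le)
  rw [hunion, measure_univ] at this
  have heq : ∀ k, P (Icc (-(A k)) (B k)) = P (Icc (0:ℝ) 1) := by
    intro k
    exact (ENNReal.toReal_eq_toReal_iff' (measure_ne_top _ _) (measure_ne_top _ _)).mp (main k)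
  simp only [heq, iSup_const] at this
  exact this.symm

lemma ae_mem_Icc01 (hP : P = (1 / 2 : ℝ≥0∞) • P.map T1 + (1 / 2 : ℝ≥0∞) • P.map T2) :
    ∀ᵐ x ∂P, x ∈ Icc (0:ℝ) 1 := by
  have h := prob_Icc01 P hP
  rw [ae_iff]
  have : {x : ℝ | ¬ x ∈ Icc (0:ℝ) 1} = (Icc (0:ℝ) 1)ᶜ := rfl
  rw [this, measure_compl measurableSet_Icc (measure_ne_top _ _), h, measure_univ, tsub_self]

def g1 (x : ℝ) : ℝ := max 0 (min x 1)

lemma g1_meas : Measurable g1 := by unfold g1; fun_prop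
lemma g1_bdd : ∀ x, |g1 x| ≤ 1 := by
  intro x; unfold g1
  rw [abs_le]; constructor
  · have : (0:ℝ) ≤ max 0 (min x 1) := le_max_left _ _; linarith
  · exact max_le (by norm_num) (min_le_right _ _)
lemma g1_eq {x : ℝ} (hx : x ∈ Icc (0:ℝ) 1) : g1 x = x := by
  unfold g1; rw [min_eq_left hx.2, max_eq_right hx.1]

lemma bdd_integrable (μ : Measure ℝ) [IsFiniteMeasure μ] {g : ℝ → ℝ} (hgm : Measurable g)
    {C : ℝ} (hgb : ∀ x, |g x| ≤ C) : Integrable g μ :=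
  Integrable.mono' (integrable_const C) hgm.aestronglyMeasurable
    (ae_of_all _ fun x => by rw [Real.norm_eq_abs]; exact hgb x)

lemma transfer (hP : P = (1 / 2 : ℝ≥0∞) • P.map T1 + (1 / 2 : ℝ≥0∞) • P.map T2)
    (g : ℝ → ℝ) (hgm : Measurable g) (C : ℝ) (hgb : ∀ x, |g x| ≤ C) :
    ∫ x, g x ∂P = (∫ x, g (T1 x) ∂P) / 2 + (∫ x, g (T2 x) ∂P) / 2 := by
  haveI i1 : IsProbabilityMeasure (P.map T1) := Measure.isProbabilityMeasure_map hT1m.aemeasurable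
  haveI i2 : IsProbabilityMeasure (P.map T2) := Measure.isProbabilityMeasure_map hT2m.aemeasurable
  have int1 : Integrable g (P.map T1) := bdd_integrable _ hgm hgb
  have int2 : Integrable g (P.map T2) := bdd_integrable _ hgm hgb
  conv_lhs => rw [hP]
  rw [integral_add_measure (int1.smul_measure (by norm_num)) (int2.smul_measure (by norm_num)),
      integral_smul_measure, integral_smul_measure,
      integral_map hT1m.aemeasurable hgm.aestronglyMeasurable,
      integral_map hT2m.aemeasurable hgm.aestronglyMeasurable]
  have : ((1:ℝ≥0∞)/2).toReal = 1/2 := by norm_num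
  rw [this]; rw [smul_eq_mul, smul_eq_mul]; ring

lemma g1_int : Integrable g1 P := bdd_integrable _ g1_meas g1_bdd
lemma g1sq_bdd : ∀ x, |(g1 x)^2| ≤ 1 := by
  intro x
  have h := g1_bdd x
  rw [abs_le] at h ⊢
  constructor
  · nlinarith [sq_nonneg (g1 x)]
  · nlinarith [h.1, h.2]

lemma g1sq_int : Integrable (fun x => (g1 x)^2) P :=
  bdd_integrable _ (g1_meas.pow_const 2) g1sq_bdd

lemma hm1 (hP : P = (1 / 2 : ℝ≥0∞) • P.map T1 + (1 / 2 : ℝ≥0∞) • P.map T2) :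
    ∫ x, g1 x ∂P = 1/2 := by
  have hae := ae_mem_Icc01 P hP
  have key := transfer P hP g1 g1_meas 1 g1_bdd
  have e1 : ∫ x, g1 (T1 x) ∂P = (∫ x, g1 x ∂P) / 3 := by
    rw [← integral_div]
    apply integral_congr_ae
    filter_upwards [hae] with x hx
    have h1 : T1 x = x / 3 := rfl
    rw [h1, g1_eq (by constructor <;> [linarith [hx.1]; linarith [hx.2]] :
      x/3 ∈ Icc (0:ℝ) 1), g1_eq hx]
  have e2 : ∫ x, g1 (T2 x) ∂P = (∫ x, g1 x ∂P) / 3 + 2/3 := by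
    have : ∫ x, g1 (T2 x) ∂P = ∫ x, (g1 x / 3 + 2/3) ∂P := by
      apply integral_congr_ae
      filter_upwards [hae] with x hx
      have h1 : T2 x = x / 3 + 2/3 := rfl
      rw [h1, g1_eq (by constructor <;> [linarith [hx.1]; linarith [hx.2]] :
        x/3 + 2/3 ∈ Icc (0:ℝ) 1), g1_eq hx]
    rw [this, integral_add ((g1_int P).div_const 3) (integrable_const _), integral_div,
      integral_const, probReal_univ]
    norm_num
  rw [e1, e2] at key; linarith

lemma hm2 (hP : P = (1 / 2 : ℝ≥0∞) • P.map T1 + (1 / 2 : ℝ≥0∞) • P.map T2) :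
    ∫ x, (g1 x)^2 ∂P = 3/8 := by
  have hae := ae_mem_Icc01 P hP
  have key := transfer P hP (fun x => (g1 x)^2) (g1_meas.pow_const 2) 1 g1sq_bdd
  have e1 : ∫ x, (g1 (T1 x))^2 ∂P = (∫ x, (g1 x)^2 ∂P) / 9 := by
    rw [← integral_div]
    apply integral_congr_ae
    filter_upwards [hae] with x hx
    have h1 : T1 x = x / 3 := rfl
    rw [h1, g1_eq (by constructor <;> [linarith [hx.1]; linarith [hx.2]] :
      x/3 ∈ Icc (0:ℝ) 1), g1_eq hx]
    ring
  have e2 : ∫ x, (g1 (T2 x))^2 ∂P = (∫ x, (g1 x)^2 ∂P) / 9 + (4/9) * ∫ x, g1 x ∂P + 4/9 := by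
    have h0 : ∫ x, (g1 (T2 x))^2 ∂P = ∫ x, ((g1 x)^2 / 9 + ((4/9) * g1 x + 4/9)) ∂P := by
      apply integral_congr_ae
      filter_upwards [hae] with x hx
      have h1 : T2 x = x / 3 + 2/3 := rfl
      rw [h1, g1_eq (by constructor <;> [linarith [hx.1]; linarith [hx.2]] :
        x/3 + 2/3 ∈ Icc (0:ℝ) 1), g1_eq hx]
      ring
    have i1 : Integrable (fun x => (g1 x)^2 / 9) P := (g1sq_int P).div_const 9
    have i2 : Integrable (fun x => (4/9 : ℝ) * g1 x + 4/9) P := by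
      exact ((g1_int P).const_mul _).add (integrable_const _)
    have i3 : Integrable (fun x => (4/9 : ℝ) * g1 x) P := (g1_int P).const_mul _
    rw [h0, integral_add i1 i2, integral_add i3 (integrable_const _),
      integral_div, integral_const_mul, integral_const, probReal_univ]
    norm_num; ring
  rw [e1, e2, hm1 P hP] at key; linarith

lemma int_quad (hP : P = (1 / 2 : ℝ≥0∞) • P.map T1 + (1 / 2 : ℝ≥0∞) • P.map T2)
    (a b c : ℝ) :
    ∫ x, (a * (g1 x)^2 + b * g1 x + c) ∂P = a * (3/8) + b * (1/2) + c := by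
  have i1 : Integrable (fun x => a * (g1 x)^2 + b * g1 x) P := by
    exact ((g1sq_int P).const_mul a).add ((g1_int P).const_mul b)
  have i2 : Integrable (fun x => a * (g1 x)^2) P := (g1sq_int P).const_mul a
  have i3 : Integrable (fun x => b * g1 x) P := (g1_int P).const_mul b
  rw [integral_add i1 (integrable_const c), integral_add i2 i3,
    integral_const_mul, integral_const_mul, hm1 P hP, hm2 P hP, integral_const, probReal_univ]
  norm_num

def hfunR (x : ℝ) : ℝ := if x ∈ Icc (2/3:ℝ) 1 then (1 - x)^2 else 0
def hfunL (x : ℝ) : ℝ := if x ∈ Icc (0:ℝ) (1/3) then x^2 else 0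
def ufun (x : ℝ) : ℝ := min (min ((x - 1/6)^2) ((x - 5/6)^2)) 1

lemma hfunR_meas : Measurable hfunR := by
  unfold hfunR; exact Measurable.ite measurableSet_Icc (by fun_prop) (by fun_prop)
lemma hfunL_meas : Measurable hfunL := by
  unfold hfunL; exact Measurable.ite measurableSet_Icc (by fun_prop) (by fun_prop)
lemma ufun_meas : Measurable ufun := by unfold ufun; fun_prop

lemma hfunR_bdd : ∀ x, |hfunR x| ≤ 1 := by
  intro x; unfold hfunR; split
  · next h => rw [abs_le]; constructor <;> nlinarith [h.1, h.2]
  · norm_num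
lemma hfunR_nonneg : ∀ x, 0 ≤ hfunR x := by
  intro x; unfold hfunR; split
  · positivity
  · exact le_refl 0
lemma hfunL_bdd : ∀ x, |hfunL x| ≤ 1 := by
  intro x; unfold hfunL; split
  · next h => rw [abs_le]; constructor <;> nlinarith [h.1, h.2]
  · norm_num
lemma ufun_bdd : ∀ x, |ufun x| ≤ 1 := by
  intro x; unfold ufun; rw [abs_le]; constructor
  · have : (0:ℝ) ≤ min (min ((x - 1/6)^2) ((x - 5/6)^2)) 1 :=
      le_min (le_min (sq_nonneg _) (sq_nonneg _)) zero_le_one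
    linarith
  · exact min_le_right _ _

lemma hfunR_int : Integrable hfunR P := bdd_integrable _ hfunR_meas hfunR_bdd
lemma hfunL_int : Integrable hfunL P := bdd_integrable _ hfunL_meas hfunL_bdd
lemma ufun_int : Integrable ufun P := bdd_integrable _ ufun_meas ufun_bdd

lemma hint_R (hP : P = (1 / 2 : ℝ≥0∞) • P.map T1 + (1 / 2 : ℝ≥0∞) • P.map T2) :
    ∫ x, hfunR x ∂P = 1/48 := by
  have hae := ae_mem_Icc01 P hP
  have key := transfer P hP hfunR hfunR_meas 1 hfunR_bdd
  have e1 : ∫ x, hfunR (T1 x) ∂P = 0 := by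
    rw [← integral_zero ℝ ℝ (μ := P)]
    apply integral_congr_ae
    filter_upwards [hae] with x hx
    have h1 : T1 x = x / 3 := rfl
    unfold hfunR
    rw [h1, if_neg]
    intro h
    have := h.1; linarith [hx.2]
  have e2 : ∫ x, hfunR (T2 x) ∂P = 1/24 := by
    have h0 : ∫ x, hfunR (T2 x) ∂P = ∫ x, ((1/9) * (g1 x)^2 + (-2/9) * g1 x + 1/9) ∂P := by
      apply integral_congr_ae
      filter_upwards [hae] with x hx
      have h1 : T2 x = x / 3 + 2/3 := rfl
      unfold hfunR
      rw [h1, if_pos (by constructor <;> [linarith [hx.1]; linarith [hx.2]]), g1_eq hx]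
      ring
    rw [h0, int_quad P hP]; norm_num
  rw [e1, e2] at key; linarith

lemma hint_L (hP : P = (1 / 2 : ℝ≥0∞) • P.map T1 + (1 / 2 : ℝ≥0∞) • P.map T2) :
    ∫ x, hfunL x ∂P = 1/48 := by
  have hae := ae_mem_Icc01 P hP
  have key := transfer P hP hfunL hfunL_meas 1 hfunL_bdd
  have e2 : ∫ x, hfunL (T2 x) ∂P = 0 := by
    rw [← integral_zero ℝ ℝ (μ := P)]
    apply integral_congr_ae
    filter_upwards [hae] with x hx
    have h1 : T2 x = x / 3 + 2/3 := rfl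
    unfold hfunL
    rw [h1, if_neg]
    intro h
    have := h.2; linarith [hx.1]
  have e1 : ∫ x, hfunL (T1 x) ∂P = 1/24 := by
    have h0 : ∫ x, hfunL (T1 x) ∂P = ∫ x, ((1/9) * (g1 x)^2 + (0:ℝ) * g1 x + 0) ∂P := by
      apply integral_congr_ae
      filter_upwards [hae] with x hx
      have h1 : T1 x = x / 3 := rfl
      unfold hfunL
      rw [h1, if_pos (by constructor <;> [linarith [hx.1]; linarith [hx.2]]), g1_eq hx]
      ring
    rw [h0, int_quad P hP]; norm_num
  rw [e1, e2] at key; linarith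

lemma hint_U (hP : P = (1 / 2 : ℝ≥0∞) • P.map T1 + (1 / 2 : ℝ≥0∞) • P.map T2) :
    ∫ x, ufun x ∂P = 1/72 := by
  have hae := ae_mem_Icc01 P hP
  have key := transfer P hP ufun ufun_meas 1 ufun_bdd
  have e1 : ∫ x, ufun (T1 x) ∂P = 1/72 := by
    have h0 : ∫ x, ufun (T1 x) ∂P = ∫ x, ((1/9) * (g1 x)^2 + (-1/9) * g1 x + 1/36) ∂P := by
      apply integral_congr_ae
      filter_upwards [hae] with x hx
      have h1 : T1 x = x / 3 := rfl
      unfold ufun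
      rw [h1, min_eq_left (by nlinarith [hx.1, hx.2] : (x/3 - 1/6)^2 ≤ (x/3 - 5/6)^2),
        min_eq_left (by nlinarith [hx.1, hx.2] : (x/3 - 1/6)^2 ≤ 1), g1_eq hx]
      ring
    rw [h0, int_quad P hP]; norm_num
  have e2 : ∫ x, ufun (T2 x) ∂P = 1/72 := by
    have h0 : ∫ x, ufun (T2 x) ∂P = ∫ x, ((1/9) * (g1 x)^2 + (-1/9) * g1 x + 1/36) ∂P := by
      apply integral_congr_ae
      filter_upwards [hae] with x hx
      have h1 : T2 x = x / 3 + 2/3 := rfl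
      unfold ufun
      rw [h1, min_eq_right (by nlinarith [hx.1, hx.2] :
          (x/3 + 2/3 - 5/6)^2 ≤ (x/3 + 2/3 - 1/6)^2),
        min_eq_left (by nlinarith [hx.1, hx.2] : (x/3 + 2/3 - 5/6)^2 ≤ 1), g1_eq hx]
      ring
    rw [h0, int_quad P hP]; norm_num
  rw [e1, e2] at key; linarith

lemma rho_nonneg (x : ℝ) (p : ℝ × ℝ) : 0 ≤ rho x p := add_nonneg (sq_nonneg _) (sq_nonneg _)

def Ffun (γ : Finset (ℝ × ℝ)) : ℝ → ℝ := fun x => ⨅ a : (↑γ : Set (ℝ × ℝ)), rho x (a : ℝ × ℝ)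

lemma distortion_eq (γ : Finset (ℝ × ℝ)) : distortion P ↑γ = ∫ x, Ffun γ x ∂P := rfl

lemma Ffun_nonneg (γ : Finset (ℝ × ℝ)) (x : ℝ) : 0 ≤ Ffun γ x :=
  Real.iInf_nonneg fun a => rho_nonneg x a

lemma Ffun_le (γ : Finset (ℝ × ℝ)) {a : ℝ × ℝ} (ha : a ∈ γ) (x : ℝ) :
    Ffun γ x ≤ rho x a :=
  ciInf_le ⟨0, by rintro y ⟨b, rfl⟩; exact rho_nonneg x b⟩
    (⟨a, by exact_mod_cast ha⟩ : (↑γ : Set (ℝ × ℝ)))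

lemma le_Ffun (γ : Finset (ℝ × ℝ)) (hne : γ.Nonempty) {c : ℝ} {x : ℝ}
    (h : ∀ a ∈ γ, c ≤ rho x a) : c ≤ Ffun γ x := by
  haveI : Nonempty (↑γ : Set (ℝ × ℝ)) := ⟨⟨hne.choose, by exact_mod_cast hne.choose_spec⟩⟩
  exact le_ciInf fun a => h a (by exact_mod_cast a.2)

lemma Ffun_meas (γ : Finset (ℝ × ℝ)) : Measurable (Ffun γ) := by
  haveI : Countable (↑γ : Set (ℝ × ℝ)) := γ.countable_toSet.to_subtype
  apply Measurable.iInf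
  intro a
  unfold rho
  fun_prop

lemma Ffun_int (n : ℕ) (γ : Finset (ℝ × ℝ)) (hne : γ.Nonempty) (hsub : (↑γ : Set (ℝ × ℝ)) ⊆ Sj n)
    (hP : P = (1 / 2 : ℝ≥0∞) • P.map T1 + (1 / 2 : ℝ≥0∞) • P.map T2) :
    Integrable (Ffun γ) P := by
  obtain ⟨a₀, ha₀⟩ := hne
  have hs := hsub (by exact_mod_cast ha₀)
  apply Integrable.mono' (integrable_const (2 : ℝ)) (Ffun_meas γ).aestronglyMeasurable
  filter_upwards [ae_mem_Icc01 P hP] with x hx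
  rw [Real.norm_eq_abs, abs_of_nonneg (Ffun_nonneg γ x)]
  refine le_trans (Ffun_le γ ha₀ x) ?_
  unfold rho
  have h1 : a₀.1 ∈ Icc (0:ℝ) 1 := hs.1
  have h2 : a₀.2 = 1 / (n : ℝ) := hs.2
  have h3 : (0:ℝ) ≤ 1/(n:ℝ) := by positivity
  have h4 : (1:ℝ)/(n:ℝ) ≤ 1 := by
    rcases Nat.eq_zero_or_pos n with h | h
    · simp [h]
    · rw [div_le_one (by exact_mod_cast h)]; exact_mod_cast h
  rw [h2]
  nlinarith [hx.1, hx.2, h1.1, h1.2]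

lemma Vc_le (n : ℕ) (hn : 1 ≤ n) (β : Finset (ℝ × ℝ)) (hne : β.Nonempty)
    (hcard : β.card ≤ n) (hsub : (↑β : Set (ℝ × ℝ)) ⊆ Sj n) :
    Vc P n ≤ distortion P ↑β := by
  apply csInf_le
  · refine ⟨0, ?_⟩
    rintro e ⟨γ, hγne, hγc, hγs, rfl⟩
    exact integral_nonneg fun x => Real.iInf_nonneg fun a => rho_nonneg x a
  · refine ⟨β, hne, hcard, ?_, rfl⟩
    intro p hp
    exact Set.mem_biUnion (Finset.mem_Icc.mpr ⟨hn, le_refl n⟩) (hsub hp)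

theorem voronoi_separation (P : Measure ℝ) [IsProbabilityMeasure P]
    (hP : P = (1 / 2 : ℝ≥0∞) • P.map T1 + (1 / 2 : ℝ≥0∞) • P.map T2)
    (n : ℕ) (hn : 2 ≤ n) (α : Finset (ℝ × ℝ)) (hne : α.Nonempty) (hcard : α.card ≤ n)
    (hsubS : (↑α : Set (ℝ × ℝ)) ⊆ Sj n)
    (hopt : distortion P (↑α : Set (ℝ × ℝ)) = Vc P n) :
    (∀ p ∈ α, p.1 ∈ Icc (0 : ℝ) (1 / 3) →
      ∀ x ∈ Icc (2 / 3 : ℝ) 1, ¬∀ b ∈ α, rho x p ≤ rho x b) ∧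
    (∀ p ∈ α, p.1 ∈ Icc (2 / 3 : ℝ) 1 →
      ∀ x ∈ Icc (0 : ℝ) (1 / 3), ¬∀ b ∈ α, rho x p ≤ rho x b) := by
  have hae := ae_mem_Icc01 P hP
  -- the competitor set
  set q1 : ℝ × ℝ := (1/6, 1/(n:ℝ)) with hq1
  set q2 : ℝ × ℝ := (5/6, 1/(n:ℝ)) with hq2
  set β : Finset (ℝ × ℝ) := {q1, q2} with hβ
  have hq1β : q1 ∈ β := by simp [hβ]
  have hq2β : q2 ∈ β := by simp [hβ]
  have hβne : β.Nonempty := ⟨q1, hq1β⟩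
  have hβsub : (↑β : Set (ℝ × ℝ)) ⊆ Sj n := by
    intro p hp
    simp only [hβ, Finset.coe_insert, Finset.coe_singleton, Set.mem_insert_iff,
      Set.mem_singleton_iff] at hp
    rcases hp with rfl | rfl
    · exact ⟨by norm_num, rfl⟩
    · exact ⟨by norm_num, rfl⟩
  have hβcard : β.card ≤ n := by
    refine le_trans ?_ hn
    rw [hβ]
    exact (Finset.card_insert_le _ _).trans (by simp)
  have hrq1 : ∀ x, rho x q1 = (x - 1/6)^2 + (1/(n:ℝ))^2 := fun x => rfl
  have hrq2 : ∀ x, rho x q2 = (x - 5/6)^2 + (1/(n:ℝ))^2 := fun x => rfl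
  have hFβ : ∀ x, Ffun β x = min ((x - 1/6)^2) ((x - 5/6)^2) + (1/(n:ℝ))^2 := by
    intro x
    apply le_antisymm
    · rcases le_total ((x - 1/6)^2) ((x - 5/6)^2) with h | h
      · rw [min_eq_left h, ← hrq1 x]; exact Ffun_le β hq1β x
      · rw [min_eq_right h, ← hrq2 x]; exact Ffun_le β hq2β x
    · apply le_Ffun β hβne
      intro a ha
      rcases Finset.mem_insert.mp ha with rfl | ha'
      · rw [hrq1 x]
        exact add_le_add_left (min_le_left _ _) _
      · rw [Finset.mem_singleton] at ha'
        subst ha'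
        rw [hrq2 x]
        exact add_le_add_left (min_le_right _ _) _
  have hdβ : distortion P ↑β = 1/72 + (1/(n:ℝ))^2 := by
    rw [distortion_eq]
    have heq : ∫ x, Ffun β x ∂P = ∫ x, (ufun x + (1/(n:ℝ))^2) ∂P := by
      apply integral_congr_ae
      filter_upwards [hae] with x hx
      rw [hFβ x]
      have h1 : ufun x = min ((x - 1/6)^2) ((x - 5/6)^2) := by
        unfold ufun
        apply min_eq_left
        refine le_trans (min_le_left _ _) ?_
        nlinarith [hx.1, hx.2, mul_nonneg (show (0:ℝ) ≤ 7/6 - x by linarith [hx.2])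
          (show (0:ℝ) ≤ 5/6 + x by linarith [hx.1])]
      rw [h1]
    rw [heq, integral_add (ufun_int P) (integrable_const _), hint_U P hP, integral_const,
      probReal_univ]
    norm_num
  have hVc : Vc P n ≤ 1/72 + (1/(n:ℝ))^2 := by
    rw [← hdβ]
    exact Vc_le P n (le_trans one_le_two hn) β hβne hβcard hβsub
  have hαint := Ffun_int P n α hne hsubS hP
  constructor
  · -- left points cannot capture right points
    intro p hp hp1 x hx hall
    have hps : p.2 = 1/(n:ℝ) := (hsubS hp).2
    have hbad : ∀ b ∈ α, ¬ (1/3 < b.1 ∧ b.1 < 1) := by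
      rintro b hb ⟨hb1, hb2⟩
      have hble := hall b hb
      have hbs : b.2 = 1/(n:ℝ) := (hsubS hb).2
      have hlt : (x - b.1)^2 < (x - p.1)^2 := by
        nlinarith [mul_pos (show (0:ℝ) < b.1 - p.1 by linarith [hp1.2])
          (show (0:ℝ) < 2*x - p.1 - b.1 by linarith [hx.1, hp1.2])]
      unfold rho at hble
      rw [hps, hbs] at hble
      linarith
    have hlow : ∀ y, (1/(n:ℝ))^2 + hfunR y ≤ Ffun α y := by
      intro y
      apply le_Ffun α hne
      intro a ha
      have ha1 := (hsubS ha).1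
      have ha2 := (hsubS ha).2
      unfold rho hfunR
      rw [ha2]
      split
      · next hy =>
        rcases le_or_gt a.1 (1/3) with h | h
        · nlinarith [mul_nonneg (show (0:ℝ) ≤ 2*y - a.1 - 1 by linarith [hy.1])
            (show (0:ℝ) ≤ 1 - a.1 by linarith)]
        · have h1 : a.1 = 1 := le_antisymm ha1.2 (by
            by_contra hc
            push_neg at hc
            exact hbad a ha ⟨h, hc⟩)
          rw [h1]
          have : (1 - y)^2 = (y - 1)^2 := by ring
          linarith
      · next hy => nlinarith [sq_nonneg (y - a.1)]
    have hlowint : ∫ y, ((1/(n:ℝ))^2 + hfunR y) ∂P ≤ distortion P ↑α := by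
      rw [distortion_eq]
      refine integral_mono ?_ hαint hlow
      exact (integrable_const _).add (hfunR_int P)
    rw [integral_add (integrable_const _) (hfunR_int P), hint_R P hP, integral_const,
      probReal_univ] at hlowint
    simp only [ENNReal.toReal_one, one_smul, smul_eq_mul, one_mul] at hlowint
    rw [hopt] at hlowint
    linarith
  · -- right points cannot capture left points
    intro p hp hp1 x hx hall
    have hps : p.2 = 1/(n:ℝ) := (hsubS hp).2
    have hbad : ∀ b ∈ α, ¬ (0 < b.1 ∧ b.1 < 2/3) := by
      rintro b hb ⟨hb1, hb2⟩
      have hble := hall b hb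
      have hbs : b.2 = 1/(n:ℝ) := (hsubS hb).2
      have hlt : (x - b.1)^2 < (x - p.1)^2 := by
        nlinarith [mul_pos (show (0:ℝ) < p.1 - b.1 by linarith [hp1.1])
          (show (0:ℝ) < p.1 + b.1 - 2*x by linarith [hx.2, hp1.1])]
      unfold rho at hble
      rw [hps, hbs] at hble
      linarith
    have hlow : ∀ y, (1/(n:ℝ))^2 + hfunL y ≤ Ffun α y := by
      intro y
      apply le_Ffun α hne
      intro a ha
      have ha1 := (hsubS ha).1
      have ha2 := (hsubS ha).2
      unfold rho hfunL
      rw [ha2]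
      split
      · next hy =>
        rcases lt_or_ge a.1 (2/3) with h | h
        · have h1 : a.1 = 0 := le_antisymm (by
            by_contra hc
            push_neg at hc
            exact hbad a ha ⟨hc, h⟩) ha1.1
          rw [h1]
          have : (y:ℝ)^2 = (y - 0)^2 := by ring
          linarith
        · nlinarith [mul_nonneg (show (0:ℝ) ≤ a.1 - 2*y by linarith [hy.2])
            (show (0:ℝ) ≤ a.1 by linarith)]
      · next hy => nlinarith [sq_nonneg (y - a.1)]
    have hlowint : ∫ y, ((1/(n:ℝ))^2 + hfunL y) ∂P ≤ distortion P ↑α := by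
      rw [distortion_eq]
      refine integral_mono ?_ hαint hlow
      exact (integrable_const _).add (hfunL_int P)
    rw [integral_add (integrable_const _) (hfunL_int P), hint_L P hP, integral_const,
      probReal_univ] at hlowint
    simp only [ENNReal.toReal_one, one_smul, smul_eq_mul, one_mul] at hlowint
    rw [hopt] at hlowint
    linarith
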